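/- Let n ≥ 1 and let A, B ⊆ {0,1}^n be nonempty. Then the average Hamming distance (1/(|A|·|B|)) Σ_{a∈A, b∈B} d(a,b) satisfies n·( h⁻¹(log|A|/n) * h⁻¹(log|B|/n) ) ≤ (1/(|A|·|B|)) Σ_{a∈A, b∈B} d(a,b) ≤ n·( 1 − h⁻¹(log|A|/n) * h⁻¹(log|B|/n) ). -/

import Mathlib

open Finset Asymptotics Filter

/-- Binary entropy function (base-2 logarithms). -/
noncomputable def binEnt (p : ℝ) : ℝ :=
  -(p * Real.logb 2 p) - (1 - p) * Real.logb 2 (1 - p)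

/-- Inverse of the binary entropy function restricted to `[0, 1/2]`. -/
noncomputable def binEntInv (x : ℝ) : ℝ :=
  sSup {p : ℝ | p ∈ Set.Icc (0:ℝ) (1/2) ∧ binEnt p ≤ x}

/-- `p*q = p(1-q) + q(1-p)`. -/
def pstar (p q : ℝ) : ℝ := p * (1 - q) + q * (1 - p)

/-- Probability of the rectangle `A × B` for `ρ`-correlated uniform binary strings. -/
noncomputable def Pxy (n : ℕ) (ρ : ℝ) (A B : Finset (Fin n → Bool)) : ℝ :=
  ∑ a ∈ A, ∑ b ∈ B,
    (2:ℝ)⁻¹ ^ n * ((1 + ρ)/2) ^ n * ((1 - ρ)/(1 + ρ)) ^ (hammingDist a b)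

/-- Hamming sphere of radius `j` around the all-zeros string in `{0,1}^n`. -/
def hSphere (n j : ℕ) : Finset (Fin n → Bool) :=
  Finset.univ.filter (fun x => (Finset.univ.filter (fun i => x i = true)).card = j)

/-- The exponent function `w_d(α,β)`. -/
noncomputable def wd (α β d : ℝ) : ℝ :=
  α + binEntInv α * binEnt (1/2 + (binEntInv β - d)/(2 * binEntInv α))
    + (1 - binEntInv α) * binEnt (1/2 + (d - (1 - binEntInv β))/(2 * (1 - binEntInv α)))

/-- The noise operator `T_ρ`. -/
noncomputable def Tnoise (n : ℕ) (ρ : ℝ) (f : (Fin n → Bool) → ℝ) (y : Fin n → Bool) : ℝ :=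
  ∑ x : Fin n → Bool,
    f x * ((1 + ρ)/2) ^ (n - hammingDist x y) * ((1 - ρ)/2) ^ (hammingDist x y)

/-- The normalized `p`-norm on functions on the hypercube. -/
noncomputable def pNorm (n : ℕ) (p : ℝ) (f : (Fin n → Bool) → ℝ) : ℝ :=
  ((2:ℝ)⁻¹ ^ n * ∑ x : Fin n → Bool, |f x| ^ p) ^ (1/p)

/-- Indicator function of a set `A ⊆ {0,1}^n`. -/
def indA (n : ℕ) (A : Finset (Fin n → Bool)) : (Fin n → Bool) → ℝ :=
  fun x => if x ∈ A then 1 else 0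

lemma binEnt_eq (p : ℝ) : binEnt p = Real.binEntropy p / Real.log 2 := by
  unfold binEnt Real.binEntropy Real.logb
  rw [Real.log_inv, Real.log_inv]
  ring

lemma binEnt_zero : binEnt 0 = 0 := by simp [binEnt_eq]

lemma binEnt_symm (p : ℝ) : binEnt (1 - p) = binEnt p := by
  simp [binEnt_eq]

lemma log2pos : (0:ℝ) < Real.log 2 := Real.log_pos (by norm_num)

lemma binEnt_strictMonoOn : StrictMonoOn binEnt (Set.Icc 0 (1/2)) := by
  intro a ha b hb hab
  rw [binEnt_eq, binEnt_eq, div_lt_div_iff_of_pos_right log2pos]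
  have h : (1/2 : ℝ) = 2⁻¹ := by norm_num
  exact Real.binEntropy_strictMonoOn (h ▸ ha) (h ▸ hb) hab

lemma binEnt_concave : ConcaveOn ℝ (Set.Icc 0 1) binEnt := by
  have h : ConcaveOn ℝ (Set.Icc 0 1) (fun p => (Real.log 2)⁻¹ • Real.binEntropy p) :=
    Real.strictConcave_binEntropy.concaveOn.smul (by positivity)
  convert h using 2 with p
  rw [binEnt_eq]; simp [div_eq_inv_mul]

lemma binEnt_nonneg {p : ℝ} (h0 : 0 ≤ p) (h1 : p ≤ 1) : 0 ≤ binEnt p := by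
  rw [binEnt_eq]
  exact div_nonneg (Real.binEntropy_nonneg h0 h1) log2pos.le

-- binEntInv basic facts
lemma binEntInv_mem {x : ℝ} (hx : 0 ≤ x) :
    binEntInv x ∈ Set.Icc (0:ℝ) (1/2) := by
  have hne : (0:ℝ) ∈ {p : ℝ | p ∈ Set.Icc (0:ℝ) (1/2) ∧ binEnt p ≤ x} := by
    simp [binEnt_zero, hx]
  have hbdd : BddAbove {p : ℝ | p ∈ Set.Icc (0:ℝ) (1/2) ∧ binEnt p ≤ x} :=
    ⟨1/2, fun p hp => hp.1.2⟩
  constructor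
  · exact le_csSup hbdd hne
  · exact csSup_le ⟨0, hne⟩ fun p hp => hp.1.2

lemma binEntInv_le {x q : ℝ} (hq : q ∈ Set.Icc (0:ℝ) (1/2)) (hxq : x ≤ binEnt q) :
    binEntInv x ≤ q := by
  apply Real.sSup_le _ hq.1
  intro p hp
  by_contra hlt
  push_neg at hlt
  have := binEnt_strictMonoOn hq hp.1 hlt
  linarith [hp.2]

noncomputable def Lf (t : ℝ) : ℝ := Real.log (1/2 + t) - Real.log (1/2 - t)

lemma Lf_hasDeriv {t : ℝ} (h0 : 0 < 1/2 + t) (h1 : 0 < 1/2 - t) :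
    HasDerivAt Lf (1/(1/2 + t) + 1/(1/2 - t)) t := by
  have ha : HasDerivAt (fun t : ℝ => Real.log (1/2 + t)) (1/(1/2+t)) t := by
    have := (Real.hasDerivAt_log h0.ne').comp t ((hasDerivAt_id t).const_add (1/2))
    exact this.congr_deriv (by simp)
  have hb : HasDerivAt (fun t : ℝ => Real.log (1/2 - t)) (-(1/(1/2-t))) t := by
    have h := (Real.hasDerivAt_log h1.ne').comp t ((hasDerivAt_id t).const_sub (1/2))
    simp only [Function.comp_def] at h
    refine h.congr_deriv ?_
    rw [one_div]; ring
  have := ha.sub hb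
  rw [sub_neg_eq_add] at this
  exact this

lemma Lf_continuousOn : ContinuousOn Lf (Set.Ico (0:ℝ) (1/2)) := by
  apply ContinuousOn.sub
  · apply Real.continuousOn_log.comp (by fun_prop)
    intro x hx
    simp only [Set.mem_compl_iff, Set.mem_singleton_iff]
    have := hx.1; intro h; linarith
  · apply Real.continuousOn_log.comp (by fun_prop)
    intro x hx
    simp only [Set.mem_compl_iff, Set.mem_singleton_iff]
    have := hx.2; intro h; linarith

lemma Lf_convex : ConvexOn ℝ (Set.Ico (0:ℝ) (1/2)) Lf := by
  have hint : interior (Set.Ico (0:ℝ) (1/2)) = Set.Ioo (0:ℝ) (1/2) := interior_Ico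
  apply MonotoneOn.convexOn_of_deriv (convex_Ico _ _) Lf_continuousOn
  · rw [hint]
    intro x hx
    exact (Lf_hasDeriv (by linarith [hx.1]) (by linarith [hx.2])).differentiableAt.differentiableWithinAt
  · rw [hint]
    intro x hx y hy hxy
    rw [(Lf_hasDeriv (by linarith [hx.1]) (by linarith [hx.2])).deriv,
        (Lf_hasDeriv (by linarith [hy.1]) (by linarith [hy.2])).deriv]
    have h1 : (0:ℝ) < 1/2 + x := by linarith [hx.1]
    have h2 : (0:ℝ) < 1/2 - x := by linarith [hx.2]
    have h3 : (0:ℝ) < 1/2 + y := by linarith [hy.1]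
    have h4 : (0:ℝ) < 1/2 - y := by linarith [hy.2]
    have e1 : 1/(1/2+x) + 1/(1/2-x) = 1/((1/2+x)*(1/2-x)) := by
      rw [div_add_div _ _ h1.ne' h2.ne']; congr 1; ring
    have e2 : 1/(1/2+y) + 1/(1/2-y) = 1/((1/2+y)*(1/2-y)) := by
      rw [div_add_div _ _ h3.ne' h4.ne']; congr 1; ring
    rw [e1, e2]
    apply one_div_le_one_div_of_le (by positivity)
    nlinarith [hx.1, hy.1]

lemma Lf_zero : Lf 0 = 0 := by simp [Lf]

lemma Lf_nonneg {t : ℝ} (h0 : 0 ≤ t) (h1 : t < 1/2) : 0 ≤ Lf t := by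
  unfold Lf
  have : Real.log (1/2 - t) ≤ Real.log (1/2 + t) :=
    Real.log_le_log (by linarith) (by linarith)
  linarith

lemma Lf_slope_mono {s t : ℝ} (hs : 0 < s) (hst : s ≤ t) (ht : t < 1/2) :
    Lf s / s ≤ Lf t / t := by
  rcases eq_or_lt_of_le hst with rfl | hlt
  · exact le_rfl
  have key : Lf s ≤ (s/t) * Lf t := by
    have hmem0 : (0:ℝ) ∈ Set.Ico (0:ℝ) (1/2) := by constructor <;> norm_num
    have hmemt : t ∈ Set.Ico (0:ℝ) (1/2) := ⟨by linarith, ht⟩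
    have htpos : (0:ℝ) < t := lt_of_lt_of_le hs hst
    have hlam : 0 ≤ s/t := by positivity
    have hlam1 : 0 ≤ 1 - s/t := by
      have : s/t ≤ 1 := (div_le_one (by linarith)).mpr hst
      linarith
    have := Lf_convex.2 hmem0 hmemt hlam1 hlam (by ring)
    simpa [Lf_zero, smul_eq_mul, show (s/t) * t = s from by field_simp] using this
  rw [div_le_div_iff₀ hs (by linarith)]
  calc Lf s * t ≤ ((s/t) * Lf t) * t := by nlinarith
    _ = Lf t * s := by
      have : t ≠ 0 := by linarith
      field_simp

noncomputable def Hf (x : ℝ) : ℝ := binEnt (1/2 - Real.sqrt x)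

lemma binEnt_continuous : Continuous binEnt := by
  have : Continuous (fun p => Real.binEntropy p / Real.log 2) :=
    Real.binEntropy_continuous.div_const _
  convert this using 1; funext p; exact binEnt_eq p

lemma binEnt_hasDeriv {p : ℝ} (h0 : p ≠ 0) (h1 : p ≠ 1) :
    HasDerivAt binEnt ((Real.log (1-p) - Real.log p)/Real.log 2) p := by
  have := (Real.hasDerivAt_binEntropy h0 h1).div_const (Real.log 2)
  rw [show binEnt = fun x => Real.binEntropy x / Real.log 2 from funext binEnt_eq]
  exact this

lemma Hf_hasDeriv {x : ℝ} (hx0 : 0 < x) (hx1 : x < 1/4) :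
    HasDerivAt Hf (-(Lf (Real.sqrt x) / (Real.sqrt x) / (2 * Real.log 2))) x := by
  have hs0 : 0 < Real.sqrt x := Real.sqrt_pos.mpr hx0
  have hs1 : Real.sqrt x < 1/2 := by
    have := Real.sqrt_lt_sqrt hx0.le hx1
    rwa [show Real.sqrt (1/4) = 1/2 by
      rw [show (1/4 : ℝ) = (1/2)^2 by norm_num, Real.sqrt_sq (by norm_num)]] at this
  have hg : HasDerivAt (fun x : ℝ => 1/2 - Real.sqrt x) (-(1/(2*Real.sqrt x))) x := by
    exact (Real.hasDerivAt_sqrt hx0.ne').const_sub (1/2)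
  have hp0 : (1/2 - Real.sqrt x) ≠ 0 := by linarith
  have hp1 : (1/2 - Real.sqrt x) ≠ 1 := by linarith
  have := (binEnt_hasDeriv hp0 hp1).comp x hg
  refine this.congr_deriv ?_
  have : 1 - (1/2 - Real.sqrt x) = 1/2 + Real.sqrt x := by ring
  rw [this]
  unfold Lf
  have hl2 : Real.log 2 ≠ 0 := (Real.log_pos (by norm_num)).ne'
  have hsx : Real.sqrt x ≠ 0 := hs0.ne'
  field_simp

lemma Hf_concave : ConcaveOn ℝ (Set.Icc (0:ℝ) (1/4)) Hf := by
  have hint : interior (Set.Icc (0:ℝ) (1/4)) = Set.Ioo (0:ℝ) (1/4) := interior_Icc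
  apply AntitoneOn.concaveOn_of_deriv (convex_Icc _ _)
  · exact (binEnt_continuous.comp (continuous_const.sub Real.continuous_sqrt)).continuousOn
  · rw [hint]
    intro x hx
    exact (Hf_hasDeriv hx.1 hx.2).differentiableAt.differentiableWithinAt
  · rw [hint]
    intro x hx y hy hxy
    rw [(Hf_hasDeriv hx.1 hx.2).deriv, (Hf_hasDeriv hy.1 hy.2).deriv]
    have h2 : (0:ℝ) < 2 * Real.log 2 := by
      have := Real.log_pos (by norm_num : (1:ℝ) < 2); linarith
    have hs0 : 0 < Real.sqrt x := Real.sqrt_pos.mpr hx.1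
    have hsy : Real.sqrt y < 1/2 := by
      have := Real.sqrt_lt_sqrt hy.1.le hy.2
      rwa [show Real.sqrt (1/4) = 1/2 by
        rw [show (1/4 : ℝ) = (1/2)^2 by norm_num, Real.sqrt_sq (by norm_num)]] at this
    have hmono := Lf_slope_mono hs0 (Real.sqrt_le_sqrt hxy) hsy
    exact neg_le_neg ((div_le_div_iff_of_pos_right h2).mpr hmono)

lemma binEnt_one : binEnt 1 = 0 := by simp [binEnt]

/-- the splitting identity -/
lemma logb_split {a0 a1 : ℝ} (h0 : 0 < a0) (h1 : 0 < a1) :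
    Real.logb 2 (a0 + a1) = binEnt (a1/(a0+a1))
      + (a0/(a0+a1)) * Real.logb 2 a0 + (a1/(a0+a1)) * Real.logb 2 a1 := by
  have ha : (0:ℝ) < a0 + a1 := by linarith
  unfold binEnt
  rw [show 1 - a1/(a0+a1) = a0/(a0+a1) by field_simp; ring,
      Real.logb_div h1.ne' ha.ne', Real.logb_div h0.ne' ha.ne']
  field_simp
  ring

def cnt {n : ℕ} (A : Finset (Fin n → Bool)) (i : Fin n) : ℕ :=
  (A.filter (fun a => a i = true)).card

lemma subadd : ∀ (n : ℕ) (A : Finset (Fin n → Bool)), A.Nonempty →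
    Real.logb 2 A.card ≤ ∑ i : Fin n, binEnt ((cnt A i : ℝ) / A.card) := by
  intro n
  induction n with
  | zero =>
    intro A hA
    have h1 : A.card ≤ 1 := by
      have := Finset.card_le_card (Finset.subset_univ A)
      simpa using this
    have h2 : 1 ≤ A.card := Finset.card_pos.mpr hA
    have : A.card = 1 := le_antisymm h1 h2
    simp [this]
  | succ n ih =>
    intro A hA
    classical
    set g : (Fin (n+1) → Bool) → (Fin n → Bool) := fun a j => a j.castSucc with hg
    set A1 := A.filter (fun a => a (Fin.last n) = true) with hA1
    set A0 := A.filter (fun a => ¬ (a (Fin.last n) = true)) with hA0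
    have hsplitcard : A0.card + A1.card = A.card := by
      rw [hA0, hA1, add_comm]
      exact Finset.card_filter_add_card_filter_not _
    have hinj : ∀ (S : Finset (Fin (n+1) → Bool)) (b : Bool),
        (∀ a ∈ S, a (Fin.last n) = b) → Set.InjOn g S := by
      intro S b hSb x hx y hy hxy
      funext i
      refine Fin.lastCases ?_ ?_ i
      · rw [hSb x hx, hSb y hy]
      · intro j; exact congrFun hxy j
    have hinj0 : Set.InjOn g A0 := by
      apply hinj A0 false
      intro a ha
      have := (Finset.mem_filter.mp ha).2
      simpa using this
    have hinj1 : Set.InjOn g A1 := hinj A1 true (fun a ha => (Finset.mem_filter.mp ha).2)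
    set B0 := A0.image g with hB0
    set B1 := A1.image g with hB1
    have hc0 : B0.card = A0.card := Finset.card_image_of_injOn hinj0
    have hc1 : B1.card = A1.card := Finset.card_image_of_injOn hinj1
    have him : ∀ (S : Finset (Fin (n+1) → Bool)), Set.InjOn g S → ∀ j : Fin n,
        cnt (S.image g) j = (S.filter (fun a => a j.castSucc = true)).card := by
      intro S hS j
      unfold cnt
      rw [Finset.filter_image]
      exact Finset.card_image_of_injOn (hS.mono (Finset.filter_subset _ _))
    -- counts relation
    have hcnt : ∀ j : Fin n, cnt A j.castSucc = cnt B0 j + cnt B1 j := by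
      intro j
      rw [hB0, hB1, him A0 hinj0 j, him A1 hinj1 j]
      unfold cnt
      have hdisj : Disjoint A0 A1 := by
        rw [hA0, hA1]
        exact (Finset.disjoint_filter_filter_not A A _).symm
      have hU : A0 ∪ A1 = A := by
        rw [hA0, hA1, Finset.union_comm]
        exact Finset.filter_union_filter_not_eq (p := fun a => a (Fin.last n) = true) A
      rw [← hU, Finset.filter_union,
        Finset.card_union_of_disjoint
          (Finset.disjoint_filter_filter hdisj)]
    rw [Fin.sum_univ_castSucc]
    have hlastcnt : cnt A (Fin.last n) = A1.card := by rw [hA1]; rfl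
    have hApos : 0 < A.card := Finset.card_pos.mpr hA
    have hcle0 : ∀ j, cnt B0 j ≤ A0.card := fun j => hc0 ▸ Finset.card_filter_le _ _
    have hcle1 : ∀ j, cnt B1 j ≤ A1.card := fun j => hc1 ▸ Finset.card_filter_le _ _
    by_cases h1 : A1.card = 0
    · have hA0A : A0.card = A.card := by omega
      have hB0ne : B0.Nonempty := by
        rw [← Finset.card_pos, hc0]; omega
      have ihb := ih B0 hB0ne
      have hterm : ∀ j : Fin n, ((cnt A j.castSucc : ℝ)) / A.card
          = (cnt B0 j : ℝ) / B0.card := by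
        intro j
        have : cnt B1 j = 0 := by have := hcle1 j; omega
        rw [hcnt j, this, hc0, hA0A]
        norm_num
      have hlast : binEnt ((cnt A (Fin.last n) : ℝ) / A.card) = 0 := by
        rw [hlastcnt, h1]
        simpa using binEnt_zero
      rw [hlast, add_zero]
      calc Real.logb 2 A.card = Real.logb 2 B0.card := by rw [hc0, hA0A]
        _ ≤ ∑ j : Fin n, binEnt ((cnt B0 j : ℝ) / B0.card) := ihb
        _ = ∑ j : Fin n, binEnt ((cnt A j.castSucc : ℝ) / A.card) := by
            refine Finset.sum_congr rfl fun j _ => ?_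
            rw [hterm j]
    · by_cases h0 : A0.card = 0
      · have hA1A : A1.card = A.card := by omega
        have hB1ne : B1.Nonempty := by
          rw [← Finset.card_pos, hc1]; omega
        have ihb := ih B1 hB1ne
        have hterm : ∀ j : Fin n, ((cnt A j.castSucc : ℝ)) / A.card
            = (cnt B1 j : ℝ) / B1.card := by
          intro j
          have : cnt B0 j = 0 := by have := hcle0 j; omega
          rw [hcnt j, this, hc1, hA1A]
          norm_num
        have hlast : binEnt ((cnt A (Fin.last n) : ℝ) / A.card) = 0 := by
          rw [hlastcnt, hA1A, div_self (by positivity : (A.card:ℝ) ≠ 0)]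
          exact binEnt_one
        rw [hlast, add_zero]
        calc Real.logb 2 A.card = Real.logb 2 B1.card := by rw [hc1, hA1A]
          _ ≤ ∑ j : Fin n, binEnt ((cnt B1 j : ℝ) / B1.card) := ihb
          _ = ∑ j : Fin n, binEnt ((cnt A j.castSucc : ℝ) / A.card) := by
              refine Finset.sum_congr rfl fun j _ => ?_
              rw [hterm j]
      · -- main case
        have h0r : (0:ℝ) < (A0.card:ℝ) := by
          have : 0 < A0.card := Nat.pos_of_ne_zero h0
          exact_mod_cast this
        have h1r : (0:ℝ) < (A1.card:ℝ) := by
          have : 0 < A1.card := Nat.pos_of_ne_zero h1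
          exact_mod_cast this
        have hAr : ((A.card:ℝ)) = (A0.card:ℝ) + (A1.card:ℝ) := by
          exact_mod_cast hsplitcard.symm
        have hArpos : (0:ℝ) < (A.card:ℝ) := by rw [hAr]; linarith
        have hB0ne : B0.Nonempty := by rw [← Finset.card_pos, hc0]; omega
        have hB1ne : B1.Nonempty := by rw [← Finset.card_pos, hc1]; omega
        have ih0 := ih B0 hB0ne
        have ih1 := ih B1 hB1ne
        rw [hc0] at ih0
        rw [hc1] at ih1
        set w0 : ℝ := (A0.card:ℝ)/(A.card:ℝ) with hw0
        set w1 : ℝ := (A1.card:ℝ)/(A.card:ℝ) with hw1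
        have hw0n : 0 ≤ w0 := by positivity
        have hw1n : 0 ≤ w1 := by positivity
        have hwsum : w0 + w1 = 1 := by
          rw [hw0, hw1, ← add_div, hAr]
          exact div_self (by linarith)
        have hconc : ∀ j : Fin n,
            w0 * binEnt ((cnt B0 j : ℝ)/(A0.card:ℝ))
              + w1 * binEnt ((cnt B1 j : ℝ)/(A1.card:ℝ))
            ≤ binEnt ((cnt A j.castSucc : ℝ)/(A.card:ℝ)) := by
          intro j
          have hx0 : ((cnt B0 j : ℝ)/(A0.card:ℝ)) ∈ Set.Icc (0:ℝ) 1 := by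
            constructor
            · positivity
            · rw [div_le_one h0r]
              exact_mod_cast hcle0 j
          have hx1 : ((cnt B1 j : ℝ)/(A1.card:ℝ)) ∈ Set.Icc (0:ℝ) 1 := by
            constructor
            · positivity
            · rw [div_le_one h1r]
              exact_mod_cast hcle1 j
          have hcomb := binEnt_concave.2 hx0 hx1 hw0n hw1n hwsum
          have heq : w0 • ((cnt B0 j : ℝ)/(A0.card:ℝ))
              + w1 • ((cnt B1 j : ℝ)/(A1.card:ℝ))
              = (cnt A j.castSucc : ℝ)/(A.card:ℝ) := by
            have e0 : (A0.card:ℝ)/(A.card:ℝ) * ((cnt B0 j:ℝ)/(A0.card:ℝ))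
                = (cnt B0 j:ℝ)/(A.card:ℝ) := by
              rw [div_mul_div_comm, mul_comm ((A0.card:ℝ)) ((cnt B0 j:ℝ)),
                mul_div_mul_right _ _ h0r.ne']
            have e1 : (A1.card:ℝ)/(A.card:ℝ) * ((cnt B1 j:ℝ)/(A1.card:ℝ))
                = (cnt B1 j:ℝ)/(A.card:ℝ) := by
              rw [div_mul_div_comm, mul_comm ((A1.card:ℝ)) ((cnt B1 j:ℝ)),
                mul_div_mul_right _ _ h1r.ne']
            rw [smul_eq_mul, smul_eq_mul, hw0, hw1, e0, e1, ← add_div, hcnt j]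
            push_cast
            rfl
          rw [heq] at hcomb
          simpa [smul_eq_mul] using hcomb
        have hlast : binEnt ((cnt A (Fin.last n) : ℝ) / A.card) = binEnt w1 := by
          rw [hlastcnt, hw1]
        have hkey : Real.logb 2 (A.card:ℝ)
            = binEnt w1 + w0 * Real.logb 2 (A0.card:ℝ) + w1 * Real.logb 2 (A1.card:ℝ) := by
          rw [hAr, hw1, hw0, hAr]
          exact logb_split h0r h1r
        rw [hlast, hkey]
        have step1 : w0 * Real.logb 2 (A0.card:ℝ) + w1 * Real.logb 2 (A1.card:ℝ)
            ≤ ∑ j : Fin n, (w0 * binEnt ((cnt B0 j : ℝ)/(A0.card:ℝ))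
              + w1 * binEnt ((cnt B1 j : ℝ)/(A1.card:ℝ))) := by
          rw [Finset.sum_add_distrib, ← Finset.mul_sum, ← Finset.mul_sum]
          have := mul_le_mul_of_nonneg_left ih0 hw0n
          have := mul_le_mul_of_nonneg_left ih1 hw1n
          linarith
        have step2 : ∑ j : Fin n, (w0 * binEnt ((cnt B0 j : ℝ)/(A0.card:ℝ))
              + w1 * binEnt ((cnt B1 j : ℝ)/(A1.card:ℝ)))
            ≤ ∑ j : Fin n, binEnt ((cnt A j.castSucc : ℝ)/(A.card:ℝ)) :=
          Finset.sum_le_sum fun j _ => hconc j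
        linarith

lemma sumsq_bound (n : ℕ) (hn : 1 ≤ n) (A : Finset (Fin n → Bool)) (hA : A.Nonempty) :
    (∑ i : Fin n, (1/2 - (cnt A i : ℝ)/A.card)^2)
        ≤ n * (1/2 - binEntInv (Real.logb 2 A.card / n))^2
      ∧ 0 ≤ 1/2 - binEntInv (Real.logb 2 A.card / n) := by
  have ha : (0:ℝ) < A.card := by
    have := Finset.card_pos.mpr hA
    exact_mod_cast this
  have hnr : (0:ℝ) < n := by exact_mod_cast hn
  set p : Fin n → ℝ := fun i => (cnt A i : ℝ)/A.card with hp
  set c : Fin n → ℝ := fun i => 1/2 - p i with hc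
  have hpmem : ∀ i, p i ∈ Set.Icc (0:ℝ) 1 := by
    intro i
    constructor
    · positivity
    · rw [div_le_one ha]
      exact_mod_cast Finset.card_filter_le _ _
  have hcsq : ∀ i, (c i)^2 ∈ Set.Icc (0:ℝ) (1/4) := by
    intro i
    have := (hpmem i).1; have := (hpmem i).2
    constructor
    · positivity
    · rw [hc]; nlinarith
  set m : ℝ := (∑ i : Fin n, (c i)^2)/n with hm
  have hmmem : m ∈ Set.Icc (0:ℝ) (1/4) := by
    constructor
    · apply div_nonneg _ hnr.le
      exact Finset.sum_nonneg fun i _ => sq_nonneg _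
    · rw [hm, div_le_iff₀ hnr]
      calc ∑ i : Fin n, (c i)^2 ≤ ∑ _i : Fin n, (1/4:ℝ) :=
            Finset.sum_le_sum fun i _ => (hcsq i).2
        _ = 1/4 * n := by rw [Finset.sum_const]; simp [mul_comm]
  -- Jensen
  have hJ := Hf_concave.le_map_sum (t := Finset.univ) (w := fun _ : Fin n => (1/n : ℝ))
    (p := fun i => (c i)^2) (fun i _ => by positivity)
    (by rw [Finset.sum_const]; simp; field_simp) (fun i _ => hcsq i)
  have hsum_eq : ∑ i : Fin n, (1/n : ℝ) • (c i)^2 = m := by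
    rw [hm, Finset.sum_div]
    refine Finset.sum_congr rfl fun i _ => ?_
    rw [smul_eq_mul]; ring
  rw [hsum_eq] at hJ
  have hHfc : ∀ i, Hf ((c i)^2) = binEnt (p i) := by
    intro i
    unfold Hf
    rw [Real.sqrt_sq_eq_abs]
    rcases abs_cases (c i) with ⟨h, _⟩ | ⟨h, _⟩
    · rw [h, hc]; norm_num
    · rw [h, hc]
      have : 1/2 - -(1/2 - p i) = 1 - p i := by ring
      rw [this, binEnt_symm]
  have hα : Real.logb 2 A.card / n ≤ Hf m := by
    calc Real.logb 2 A.card / n ≤ (∑ i : Fin n, binEnt (p i))/n :=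
          div_le_div_of_nonneg_right (subadd n A hA) hnr.le

      _ = ∑ i : Fin n, (1/n : ℝ) • Hf ((c i)^2) := by
          rw [Finset.sum_div]
          refine Finset.sum_congr rfl fun i _ => ?_
          rw [hHfc i, smul_eq_mul]; ring
      _ ≤ Hf m := hJ
  have hsm : Real.sqrt m ≤ 1/2 := by
    have := Real.sqrt_le_sqrt hmmem.2
    rwa [show Real.sqrt (1/4) = 1/2 by
      rw [show (1/4:ℝ) = (1/2)^2 by norm_num, Real.sqrt_sq (by norm_num)]] at this
  have hq : (1/2 - Real.sqrt m) ∈ Set.Icc (0:ℝ) (1/2) := by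
    constructor
    · linarith
    · have := Real.sqrt_nonneg m; linarith
  have hφ : binEntInv (Real.logb 2 A.card / n) ≤ 1/2 - Real.sqrt m := by
    apply binEntInv_le hq
    rwa [show binEnt (1/2 - Real.sqrt m) = Hf m from rfl]
  have hpos : 0 ≤ 1/2 - binEntInv (Real.logb 2 A.card / n) := by
    have := Real.sqrt_nonneg m; linarith
  constructor
  · have h1 : Real.sqrt m ≤ 1/2 - binEntInv (Real.logb 2 A.card / n) := by linarith
    have h2 : m ≤ (1/2 - binEntInv (Real.logb 2 A.card / n))^2 := by
      have := Real.sq_sqrt hmmem.1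
      nlinarith [Real.sqrt_nonneg m]
    calc ∑ i : Fin n, (c i)^2 = n * m := by rw [hm]; field_simp
      _ ≤ n * (1/2 - binEntInv (Real.logb 2 A.card / n))^2 := by
          exact mul_le_mul_of_nonneg_left h2 hnr.le
  · exact hpos

lemma total_count (n : ℕ) (A B : Finset (Fin n → Bool)) :
    ∑ a ∈ A, ∑ b ∈ B, (hammingDist a b : ℝ)
      = ∑ i : Fin n, ((cnt A i : ℝ) * (B.card - cnt B i)
          + ((A.card : ℝ) - cnt A i) * cnt B i) := by
  classical
  have hham : ∀ a b : Fin n → Bool, (hammingDist a b : ℝ)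
      = ∑ i : Fin n, (if a i ≠ b i then (1:ℝ) else 0) := by
    intro a b
    rw [hammingDist, Finset.card_filter]
    push_cast
    rfl
  have hBR : ∀ i : Fin n, ((B.filter (fun b => ¬ (b i = true))).card : ℝ)
      = (B.card : ℝ) - cnt B i := by
    intro i
    have h := Finset.card_filter_add_card_filter_not
      (s := B) (p := fun b => b i = true)
    have h2 := congrArg (fun k : ℕ => (k : ℝ)) h
    push_cast at h2
    unfold cnt
    linarith
  have hAR : ∀ i : Fin n, ((A.filter (fun a => ¬ (a i = true))).card : ℝ)
      = (A.card : ℝ) - cnt A i := by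
    intro i
    have h := Finset.card_filter_add_card_filter_not
      (s := A) (p := fun a => a i = true)
    have h2 := congrArg (fun k : ℕ => (k : ℝ)) h
    push_cast at h2
    unfold cnt
    linarith
  calc ∑ a ∈ A, ∑ b ∈ B, (hammingDist a b : ℝ)
      = ∑ a ∈ A, ∑ i : Fin n, ∑ b ∈ B, (if a i ≠ b i then (1:ℝ) else 0) := by
        refine Finset.sum_congr rfl fun a _ => ?_
        rw [← Finset.sum_comm]
        exact Finset.sum_congr rfl fun b _ => hham a b
    _ = ∑ i : Fin n, ∑ a ∈ A, ∑ b ∈ B, (if a i ≠ b i then (1:ℝ) else 0) :=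
        Finset.sum_comm
    _ = ∑ i : Fin n, ((cnt A i : ℝ) * (B.card - cnt B i)
          + ((A.card : ℝ) - cnt A i) * cnt B i) := by
        refine Finset.sum_congr rfl fun i _ => ?_
        have hb : ∀ v : Bool, ∑ b ∈ B, (if v ≠ b i then (1:ℝ) else 0)
            = if v = true then ((B.card : ℝ) - cnt B i) else (cnt B i) := by
          intro v
          cases v
          · have e : ∀ b : Fin n → Bool, ((false:Bool) ≠ b i) = (b i = true) := by
              intro b; cases h : b i <;> simp [h]
            simp only [e, Finset.sum_boole]
            simp [cnt]
          · have e : ∀ b : Fin n → Bool, ((true:Bool) ≠ b i) = ¬(b i = true) := by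
              intro b; cases h : b i <;> simp [h]
            simp only [e, Finset.sum_boole]
            simpa using hBR i
        calc ∑ a ∈ A, ∑ b ∈ B, (if a i ≠ b i then (1:ℝ) else 0)
            = ∑ a ∈ A, (if a i = true then ((B.card : ℝ) - cnt B i) else (cnt B i)) :=
              Finset.sum_congr rfl fun a _ => hb (a i)
          _ = (cnt A i : ℝ) * (B.card - cnt B i) + ((A.card : ℝ) - cnt A i) * cnt B i := by
              rw [Finset.sum_ite, Finset.sum_const, Finset.sum_const]
              simp only [nsmul_eq_mul]
              have h1 : ((A.filter (fun a => a i = true)).card : ℝ) = (cnt A i : ℝ) := rfl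
              rw [h1, hAR i]


/-- Corollary 1 (bounds on the average Hamming distance between two sets). -/
theorem stmt_16 (n : ℕ) (hn : 1 ≤ n) (A B : Finset (Fin n → Bool))
    (hA : A.Nonempty) (hB : B.Nonempty) :
    (n:ℝ) * pstar (binEntInv (Real.logb 2 A.card / n)) (binEntInv (Real.logb 2 B.card / n))
      ≤ (1 / ((A.card : ℝ) * B.card)) * ∑ a ∈ A, ∑ b ∈ B, (hammingDist a b : ℝ) ∧
    (1 / ((A.card : ℝ) * B.card)) * ∑ a ∈ A, ∑ b ∈ B, (hammingDist a b : ℝ)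
      ≤ (n:ℝ) * (1 - pstar (binEntInv (Real.logb 2 A.card / n))
                           (binEntInv (Real.logb 2 B.card / n))) := by
  have hApos : (0:ℝ) < A.card := by exact_mod_cast Finset.card_pos.mpr hA
  have hBpos : (0:ℝ) < B.card := by exact_mod_cast Finset.card_pos.mpr hB
  have hnr : (0:ℝ) < n := by exact_mod_cast hn
  set φA := binEntInv (Real.logb 2 A.card / n) with hφA
  set φB := binEntInv (Real.logb 2 B.card / n) with hφB
  set cA : Fin n → ℝ := fun i => 1/2 - (cnt A i : ℝ)/A.card with hcA
  set cB : Fin n → ℝ := fun i => 1/2 - (cnt B i : ℝ)/B.card with hcB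
  obtain ⟨hsqA, hposA⟩ := sumsq_bound n hn A hA
  obtain ⟨hsqB, hposB⟩ := sumsq_bound n hn B hB
  set M : ℝ := n * ((1/2 - φA) * (1/2 - φB)) with hM
  have hMnn : 0 ≤ M := by positivity
  have hCS : (∑ i : Fin n, cA i * cB i)^2 ≤ M^2 := by
    calc (∑ i : Fin n, cA i * cB i)^2
        ≤ (∑ i : Fin n, (cA i)^2) * (∑ i : Fin n, (cB i)^2) :=
          Finset.sum_mul_sq_le_sq_mul_sq _ _ _
      _ ≤ (n * (1/2 - φA)^2) * (n * (1/2 - φB)^2) := by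
          apply mul_le_mul hsqA hsqB (Finset.sum_nonneg fun i _ => sq_nonneg _)
          positivity
      _ = M^2 := by rw [hM]; ring
  have habs : |∑ i : Fin n, cA i * cB i| ≤ M := by
    nlinarith [sq_abs (∑ i : Fin n, cA i * cB i), abs_nonneg (∑ i : Fin n, cA i * cB i)]
  have havg : (1 / ((A.card : ℝ) * B.card)) * ∑ a ∈ A, ∑ b ∈ B, (hammingDist a b : ℝ)
      = (n:ℝ)/2 - 2 * ∑ i : Fin n, cA i * cB i := by
    rw [total_count]
    have hper : ∀ i : Fin n, ((cnt A i : ℝ) * (B.card - cnt B i)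
        + ((A.card : ℝ) - cnt A i) * cnt B i)
        = (A.card : ℝ) * B.card * (1/2 - 2 * (cA i * cB i)) := by
      intro i
      rw [hcA, hcB]
      field_simp
      ring
    rw [Finset.sum_congr rfl fun i _ => hper i, ← Finset.mul_sum]
    rw [one_div, inv_mul_cancel_left₀ (by positivity)]
    rw [Finset.sum_sub_distrib, Finset.sum_const, ← Finset.mul_sum]
    simp only [nsmul_eq_mul, Finset.card_univ, Fintype.card_fin]
    ring
  constructor
  · rw [havg]
    have : (n:ℝ) * pstar φA φB = (n:ℝ)/2 - 2*M := by
      rw [hM]; unfold pstar; ring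
    rw [this]
    have := (abs_le.mp habs).2
    linarith
  · rw [havg]
    have : (n:ℝ) * (1 - pstar φA φB) = (n:ℝ)/2 + 2*M := by
      rw [hM]; unfold pstar; ring
    rw [this]
    have := (abs_le.mp habs).1
    linarith
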